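/- arXiv:2510.21301 — 3 statements merged into one kernel-verified Lean document; each statement's English description precedes it below -/
import Mathlib

section
/- If λ ∈ Γ̃_k (i.e. λ ∈ Γ_{k-1} and S_k(λ) > 0) and 1 ≤ l < k ≤ n, then σ_{k-1}(λ)σ_l(λ)/(C(n,k−1)C(n,l)) ≥ σ_k(λ)σ_{l-1}(λ)/(C(n,k)C(n,l−1)). -/
open Finset

noncomputable def esym (n : ℕ) (k : ℤ) (lam : Fin n → ℝ) : ℝ :=
  if 0 ≤ k then ∑ s ∈ (Finset.univ : Finset (Fin n)).powersetCard k.toNat, ∏ i ∈ s, lam i else 0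

noncomputable def esymDel (n : ℕ) (k : ℤ) (p : Fin n) (lam : Fin n → ℝ) : ℝ :=
  if 0 ≤ k then
    ∑ s ∈ ((Finset.univ : Finset (Fin n)).erase p).powersetCard k.toNat, ∏ i ∈ s, lam i
  else 0

noncomputable def sumHess (n : ℕ) (α : ℝ) (k : ℤ) (lam : Fin n → ℝ) : ℝ :=
  esym n k lam + α * esym n (k - 1) lam

noncomputable def sumHessDel (n : ℕ) (α : ℝ) (k : ℤ) (p : Fin n) (lam : Fin n → ℝ) : ℝ :=
  esymDel n k p lam + α * esymDel n (k - 1) p lam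

def Gamma (n k : ℕ) : Set (Fin n → ℝ) :=
  {lam | ∀ m : ℤ, 1 ≤ m → m ≤ (k : ℤ) → 0 < esym n m lam}

def GammaTilde (n : ℕ) (α : ℝ) (k : ℕ) : Set (Fin n → ℝ) :=
  Gamma n (k - 1) ∩ {lam | 0 < sumHess n α (k : ℤ) lam}

noncomputable def etaMap (n : ℕ) (lam : Fin n → ℝ) : Fin n → ℝ :=
  fun i => (∑ j, lam j) - lam i

def GammaPrime (n : ℕ) (α : ℝ) (k : ℕ) : Set (Fin n → ℝ) :=
  {lam | etaMap n lam ∈ GammaTilde n α k}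


open Polynomial in
lemma my_deriv_roots (s : Multiset ℝ) (h2 : 2 ≤ Multiset.card s) :
    ∃ t : Multiset ℝ, Multiset.card t = Multiset.card s - 1 ∧
      ∀ j : ℕ, j + 1 ≤ Multiset.card s →
        (Multiset.card s : ℝ) * t.esymm j
          = ((Multiset.card s - j : ℕ) : ℝ) * s.esymm j := by
  set n := Multiset.card s with hn
  set f : ℝ[X] := (s.map fun r => X - C r).prod with hf
  have hmonic : f.Monic := monic_multiset_prod_of_monic _ _ fun r _ => monic_X_sub_C r
  have hdeg : f.natDegree = n := by
    rw [hf, natDegree_multiset_prod_X_sub_C_eq_card]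
  have hroots : f.roots = s := roots_multiset_prod_X_sub_C s
  set t := (derivative f).roots with ht
  have hge : n ≤ Multiset.card t + 1 := by
    have := Polynomial.card_roots_le_derivative f
    rw [hroots] at this
    exact this
  have hdle : (derivative f).natDegree ≤ n - 1 := by
    have := natDegree_derivative_le f
    omega
  have hcard_le : Multiset.card t ≤ n - 1 :=
    (Polynomial.card_roots' _).trans hdle
  have hcard : Multiset.card t = n - 1 := by omega
  have hdeg' : (derivative f).natDegree = n - 1 := by
    have h3 := Polynomial.card_roots' (derivative f)
    rw [← ht] at h3
    omega
  have hsplit : Splits (derivative f) := by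
    rw [splits_iff_card_roots, ← ht, hcard, hdeg']
  have heq : derivative f = C ((derivative f).leadingCoeff) * (t.map fun r => X - C r).prod :=
    hsplit.eq_prod_roots
  have hfn : f.coeff n = 1 := by
    rw [← hdeg]; exact hmonic.coeff_natDegree
  have hlead : (derivative f).leadingCoeff = (n : ℝ) := by
    rw [leadingCoeff, hdeg', Polynomial.coeff_derivative]
    have h1 : n - 1 + 1 = n := by omega
    rw [h1, hfn, one_mul, ← Nat.cast_add_one, h1]
  refine ⟨t, hcard, fun j hj => ?_⟩
  have e1 : (derivative f).coeff (n - 1 - j) = f.coeff (n - j) * ((n - j : ℕ) : ℝ) := by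
    rw [Polynomial.coeff_derivative]
    have h1 : n - 1 - j + 1 = n - j := by omega
    rw [h1]
    congr 1
    rw [← Nat.cast_add_one, h1]
  have e2 : f.coeff (n - j) = (-1) ^ j * s.esymm j := by
    have := Multiset.prod_X_sub_C_coeff s (k := n - j) (by omega)
    rw [← hf, ← hn] at this
    have h1 : n - (n - j) = j := by omega
    rw [h1] at this
    exact this
  have e3 : (derivative f).coeff (n - 1 - j) = (n : ℝ) * ((-1) ^ j * t.esymm j) := by
    conv_lhs => rw [heq]
    rw [Polynomial.coeff_C_mul, hlead]
    have h2' : n - 1 - j ≤ Multiset.card t := by omega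
    rw [Multiset.prod_X_sub_C_coeff t h2']
    have h1 : Multiset.card t - (n - 1 - j) = j := by omega
    rw [h1]
  have hcomb : (n : ℝ) * ((-1) ^ j * t.esymm j) = (-1) ^ j * s.esymm j * ((n - j : ℕ) : ℝ) := by
    rw [← e3, e1, e2]
  have hne : ((-1 : ℝ)) ^ j ≠ 0 := pow_ne_zero _ (by norm_num)
  apply mul_left_cancel₀ hne
  linear_combination hcomb


lemma my_double_count {ι : Type*} [DecidableEq ι] (A : Finset ι) (f : ι → ℝ) (m : ℕ) :
    ∑ i ∈ A, ∑ t ∈ (A.erase i).powersetCard m, ∏ x ∈ t, f x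
      = ((A.card - m : ℕ) : ℝ) * ∑ t ∈ A.powersetCard m, ∏ x ∈ t, f x := by
  rw [Finset.sum_comm' (t' := A.powersetCard m) (s' := fun t => A \ t)
    (f := fun _ t => ∏ x ∈ t, f x)]
  · rw [Finset.mul_sum]
    refine Finset.sum_congr rfl fun t ht => ?_
    rw [Finset.sum_const, nsmul_eq_mul]
    congr 2
    rw [Finset.mem_powersetCard] at ht
    rw [Finset.card_sdiff_of_subset ht.1, ht.2]
  · intro i t
    simp only [Finset.mem_powersetCard, Finset.subset_erase, Finset.mem_sdiff]
    tauto

lemma my_top {ι : Type*} [DecidableEq ι] (A : Finset ι) (f : ι → ℝ) (h1 : 1 ≤ A.card) :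
    ∑ t ∈ A.powersetCard (A.card - 1), ∏ x ∈ t, f x = ∑ i ∈ A, ∏ x ∈ A.erase i, f x := by
  have h := my_double_count A f (A.card - 1)
  have hc : A.card - (A.card - 1) = 1 := by omega
  rw [hc] at h
  push_cast at h
  rw [one_mul] at h
  rw [← h]
  refine Finset.sum_congr rfl fun i hi => ?_
  have : (A.erase i).card = A.card - 1 := Finset.card_erase_of_mem hi
  rw [← this, Finset.powersetCard_self, Finset.sum_singleton]

lemma my_newton_base {ι : Type*} [DecidableEq ι] (A : Finset ι) (f : ι → ℝ) (h2 : 2 ≤ A.card) :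
    2 * (A.card : ℝ) * ((∑ t ∈ A.powersetCard (A.card - 2), ∏ x ∈ t, f x)
        * ∑ t ∈ A.powersetCard A.card, ∏ x ∈ t, f x)
      ≤ ((A.card : ℝ) - 1) * (∑ t ∈ A.powersetCard (A.card - 1), ∏ x ∈ t, f x) ^ 2 := by
  set x : ι → ℝ := fun i => ∏ j ∈ A.erase i, f j with hx
  have hS : ∑ t ∈ A.powersetCard (A.card - 1), ∏ y ∈ t, f y = ∑ i ∈ A, x i :=
    my_top A f (by omega)
  have hP : ∑ t ∈ A.powersetCard A.card, ∏ y ∈ t, f y = ∏ y ∈ A, f y := by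
    rw [Finset.powersetCard_self, Finset.sum_singleton]
  have key : ∀ i ∈ A, ∀ j ∈ A.erase i,
      x i * x j = (∏ y ∈ A, f y) * ∏ y ∈ (A.erase i).erase j, f y := by
    intro i hi j hj
    have hji : j ∈ A.erase i := hj
    have hjA : j ∈ A := Finset.mem_of_mem_erase hj
    have e1 : x i = f j * ∏ y ∈ (A.erase i).erase j, f y :=
      (Finset.mul_prod_erase _ f hji).symm
    have e2 : f j * x j = ∏ y ∈ A, f y := Finset.mul_prod_erase A f hjA
    calc x i * x j = (f j * ∏ y ∈ (A.erase i).erase j, f y) * x j := by rw [← e1]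
      _ = (∏ y ∈ (A.erase i).erase j, f y) * (f j * x j) := by ring
      _ = (∏ y ∈ A, f y) * ∏ y ∈ (A.erase i).erase j, f y := by rw [e2]; ring
  have h1 : ∑ i ∈ A, ∑ j ∈ A.erase i, x i * x j
      = 2 * ((∑ t ∈ A.powersetCard (A.card - 2), ∏ y ∈ t, f y) * ∏ y ∈ A, f y) := by
    rw [Finset.sum_congr rfl (fun i hi => Finset.sum_congr rfl (fun j hj => key i hi j hj))]
    have inner : ∀ i ∈ A, ∑ j ∈ A.erase i, (∏ y ∈ A, f y) * ∏ y ∈ (A.erase i).erase j, f y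
        = (∏ y ∈ A, f y) * ∑ t ∈ (A.erase i).powersetCard (A.card - 2), ∏ y ∈ t, f y := by
      intro i hi
      rw [← Finset.mul_sum]
      congr 1
      have hcard : (A.erase i).card = A.card - 1 := Finset.card_erase_of_mem hi
      have := my_top (A.erase i) f (by omega)
      rw [hcard] at this
      have h21 : A.card - 1 - 1 = A.card - 2 := by omega
      rw [h21] at this
      rw [this]
    rw [Finset.sum_congr rfl inner, ← Finset.mul_sum, my_double_count A f (A.card - 2)]
    have : A.card - (A.card - 2) = 2 := by omega
    rw [this]
    push_cast
    ring
  have h2' : ∑ i ∈ A, ∑ j ∈ A.erase i, x i * x j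
      = (∑ i ∈ A, x i) ^ 2 - ∑ i ∈ A, x i ^ 2 := by
    have : ∀ i ∈ A, ∑ j ∈ A.erase i, x i * x j = x i * ((∑ j ∈ A, x j) - x i) := by
      intro i hi
      rw [← Finset.mul_sum, Finset.sum_erase_eq_sub hi]
    rw [Finset.sum_congr rfl this]
    rw [Finset.sum_congr rfl (g := fun i => x i * ∑ j ∈ A, x j - x i ^ 2)
      (fun i _ => by ring)]
    rw [Finset.sum_sub_distrib, ← Finset.sum_mul]
    ring
  have cauchy : (∑ i ∈ A, x i) ^ 2 ≤ (A.card : ℝ) * ∑ i ∈ A, x i ^ 2 :=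
    sq_sum_le_card_mul_sum_sq
  rw [hS, hP]
  nlinarith [h1, h2', cauchy]

lemma my_choose (n j : ℕ) (hj : j ≤ n) :
    (n + 1 - j) * (n + 1).choose j = (n + 1) * n.choose j := by
  cases j with
  | zero => simp
  | succ j =>
    have h1 : (n + 1) * n.choose j = (n + 1).choose (j + 1) * (j + 1) :=
      Nat.add_one_mul_choose_eq n j
    have h2 : (n + 1).choose (j + 1) = n.choose j + n.choose (j + 1) :=
      Nat.choose_succ_succ n j
    rw [h2] at h1 ⊢
    zify at h1
    zify [show j + 1 ≤ n + 1 by omega]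
    linear_combination h1

lemma my_newton : ∀ (n : ℕ) (s : Multiset ℝ), Multiset.card s = n → ∀ i : ℕ, i + 2 ≤ n →
    s.esymm i * s.esymm (i + 2) * ((n.choose (i + 1) : ℕ) : ℝ) ^ 2 ≤
      s.esymm (i + 1) ^ 2 * (((n.choose i : ℕ) : ℝ) * ((n.choose (i + 2) : ℕ) : ℝ)) := by
  intro n
  induction n with
  | zero => intro s _ i hi; omega
  | succ n ih =>
    intro s hs i hi
    rcases eq_or_lt_of_le hi with heq | hlt
    · -- base case : i + 2 = n + 1
      obtain rfl : n = i + 1 := by omega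
      have hesymm_eq : ∀ j : ℕ, s.esymm j =
          ∑ t ∈ (Finset.univ : Finset (Fin s.toList.length)).powersetCard j,
            ∏ x ∈ t, s.toList.get x := by
        intro j
        have h1 : ((Finset.univ : Finset (Fin s.toList.length)).val.map s.toList.get)
            = (s.toList : Multiset ℝ) := by
          have h0 : (Finset.univ : Finset (Fin s.toList.length)).val
              = ↑(List.finRange s.toList.length) := rfl
          rw [h0, Multiset.map_coe, List.map_get_finRange]
        rw [← Finset.esymm_map_val, h1, Multiset.coe_toList]
      set A : Finset (Fin s.toList.length) := Finset.univ with hA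
      have hAcard : A.card = i + 2 := by
        rw [hA, Finset.card_univ, Fintype.card_fin, Multiset.length_toList, hs]
      have hbase := my_newton_base A s.toList.get (by omega)
      rw [hAcard] at hbase
      have e0 : i + 2 - 2 = i := by omega
      have e1 : i + 2 - 1 = i + 1 := by omega
      rw [e0, e1, ← hesymm_eq, ← hesymm_eq, ← hesymm_eq] at hbase
      have c1 : (i + 2).choose (i + 1) = i + 2 := Nat.choose_succ_self_right (i + 1)
      have c2 : (i + 2).choose (i + 2) = 1 := Nat.choose_self _
      have c3 : 2 * (i + 2).choose i = (i + 2) * (i + 1) := by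
        have h := my_choose (i + 1) i (by omega)
        have h2 : i + 1 + 1 - i = 2 := by omega
        rw [h2, Nat.choose_succ_self_right i] at h
        exact h
      have hc1 : (((i + 1 + 1).choose (i + 1) : ℕ) : ℝ) = (i : ℝ) + 2 := by
        rw [show i + 1 + 1 = i + 2 from rfl, c1]; push_cast; ring
      have hc2 : (((i + 1 + 1).choose (i + 2) : ℕ) : ℝ) = 1 := by
        rw [show i + 1 + 1 = i + 2 from rfl, c2]; push_cast; ring
      have hc3 : 2 * (((i + 1 + 1).choose i : ℕ) : ℝ) = ((i : ℝ) + 2) * ((i : ℝ) + 1) := by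
        rw [show i + 1 + 1 = i + 2 from rfl]
        exact_mod_cast congrArg (Nat.cast : ℕ → ℝ) c3
      rw [hc1, hc2]
      push_cast at hbase
      nlinarith [mul_le_mul_of_nonneg_left hbase (show (0:ℝ) ≤ (i : ℝ) + 2 by positivity),
        sq_nonneg (s.esymm (i + 1))]
    · -- inductive step
      have hi2n : i + 2 ≤ n := by omega
      obtain ⟨t, hct, hesym⟩ := my_deriv_roots s (by omega)
      rw [hs] at hct hesym
      have hct' : Multiset.card t = n := by omega
      have IH := ih t hct' i hi2n
      set N : ℝ := (n : ℝ) + 1 with hN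
      have hN0 : N ≠ 0 := by positivity
      have hNcast : ((n + 1 : ℕ) : ℝ) = N := by push_cast; ring
      set D0 : ℝ := ((n + 1 - i : ℕ) : ℝ) with hD0
      set D1 : ℝ := ((n + 1 - (i + 1) : ℕ) : ℝ) with hD1
      set D2 : ℝ := ((n + 1 - (i + 2) : ℕ) : ℝ) with hD2
      have hD0pos : 0 < D0 := by rw [hD0]; exact_mod_cast Nat.pos_of_ne_zero (by omega)
      have hD1pos : 0 < D1 := by rw [hD1]; exact_mod_cast Nat.pos_of_ne_zero (by omega)
      have hD2pos : 0 < D2 := by rw [hD2]; exact_mod_cast Nat.pos_of_ne_zero (by omega)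
      have eb : ∀ j : ℕ, j ≤ i + 2 → N * t.esymm j = ((n + 1 - j : ℕ) : ℝ) * s.esymm j := by
        intro j hj
        have h := hesym j (by omega)
        rw [hNcast] at h
        exact h
      have fc : ∀ j : ℕ, j ≤ i + 2 →
          ((n + 1 - j : ℕ) : ℝ) * (((n + 1).choose j : ℕ) : ℝ) = N * ((n.choose j : ℕ) : ℝ) := by
        intro j hj
        rw [← hNcast]
        exact_mod_cast congrArg (Nat.cast : ℕ → ℝ) (my_choose n j (by omega))
      have hb0 : t.esymm i = D0 * s.esymm i / N := by
        rw [eq_div_iff hN0, hD0]; linarith [eb i (by omega)]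
      have hb1 : t.esymm (i + 1) = D1 * s.esymm (i + 1) / N := by
        rw [eq_div_iff hN0, hD1]; linarith [eb (i + 1) (by omega)]
      have hb2 : t.esymm (i + 2) = D2 * s.esymm (i + 2) / N := by
        rw [eq_div_iff hN0, hD2]; linarith [eb (i + 2) (by omega)]
      have hd0 : ((n.choose i : ℕ) : ℝ) = D0 * (((n + 1).choose i : ℕ) : ℝ) / N := by
        rw [eq_div_iff hN0, hD0]; linarith [fc i (by omega)]
      have hd1 : ((n.choose (i + 1) : ℕ) : ℝ)
          = D1 * (((n + 1).choose (i + 1) : ℕ) : ℝ) / N := by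
        rw [eq_div_iff hN0, hD1]; linarith [fc (i + 1) (by omega)]
      have hd2 : ((n.choose (i + 2) : ℕ) : ℝ)
          = D2 * (((n + 1).choose (i + 2) : ℕ) : ℝ) / N := by
        rw [eq_div_iff hN0, hD2]; linarith [fc (i + 2) (by omega)]
      rw [hb0, hb1, hb2, hd0, hd1, hd2] at IH
      have key : D0 * D1 ^ 2 * D2 *
          (s.esymm i * s.esymm (i + 2) * (((n + 1).choose (i + 1) : ℕ) : ℝ) ^ 2)
          ≤ D0 * D1 ^ 2 * D2 * (s.esymm (i + 1) ^ 2 *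
            ((((n + 1).choose i : ℕ) : ℝ) * (((n + 1).choose (i + 2) : ℕ) : ℝ))) := by
        calc D0 * D1 ^ 2 * D2 *
            (s.esymm i * s.esymm (i + 2) * (((n + 1).choose (i + 1) : ℕ) : ℝ) ^ 2)
            = N ^ 4 * ((D0 * s.esymm i / N) * (D2 * s.esymm (i + 2) / N) *
              (D1 * (((n + 1).choose (i + 1) : ℕ) : ℝ) / N) ^ 2) := by
              field_simp
          _ ≤ N ^ 4 * ((D1 * s.esymm (i + 1) / N) ^ 2 *
              ((D0 * (((n + 1).choose i : ℕ) : ℝ) / N) *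
               (D2 * (((n + 1).choose (i + 2) : ℕ) : ℝ) / N))) := by
              apply mul_le_mul_of_nonneg_left IH (by positivity)
          _ = D0 * D1 ^ 2 * D2 * (s.esymm (i + 1) ^ 2 *
              ((((n + 1).choose i : ℕ) : ℝ) * (((n + 1).choose (i + 2) : ℕ) : ℝ))) := by
              field_simp
      exact le_of_mul_le_mul_left key (by positivity)

theorem stmt5 (n : ℕ) (α : ℝ) (hα : 0 ≤ α) (k l : ℕ) (hl : 1 ≤ l) (hlk : l < k) (hkn : k ≤ n)
    (lam : Fin n → ℝ) (hlam : lam ∈ GammaTilde n α k) :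
    esym n ((k : ℤ) - 1) lam * esym n (l : ℤ) lam / ((n.choose (k - 1) : ℝ) * (n.choose l : ℝ))
      ≥ esym n (k : ℤ) lam * esym n ((l : ℤ) - 1) lam
        / ((n.choose k : ℝ) * (n.choose (l - 1) : ℝ)) := by
  have hk2 : 2 ≤ k := by omega
  set E : ℕ → ℝ := fun j =>
    ∑ t ∈ (Finset.univ : Finset (Fin n)).powersetCard j, ∏ i ∈ t, lam i with hE
  have hesym_nat : ∀ j : ℕ, esym n (j : ℤ) lam = E j := by
    intro j
    rw [esym, if_pos (Int.natCast_nonneg j), Int.toNat_natCast]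
  have hE0 : E 0 = 1 := by simp [hE]
  have hcast1 : ((k : ℤ) - 1) = ((k - 1 : ℕ) : ℤ) := by omega
  have hcast2 : ((l : ℤ) - 1) = ((l - 1 : ℕ) : ℤ) := by omega
  rw [hcast1, hcast2, hesym_nat, hesym_nat, hesym_nat, hesym_nat]
  have hGamma := hlam.1
  have hpos' : ∀ j : ℕ, j ≤ k - 1 → 0 < E j := by
    intro j hj
    rcases Nat.eq_zero_or_pos j with rfl | h1
    · rw [hE0]; norm_num
    · have h := hGamma (j : ℤ) (by exact_mod_cast h1) (by
        have : j ≤ k - 1 := hj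
        omega)
      rwa [hesym_nat] at h
  have hchoosepos : ∀ j : ℕ, j ≤ n → (0 : ℝ) < (n.choose j : ℝ) := fun j hj => by
    exact_mod_cast Nat.choose_pos hj
  rcases le_or_gt (E k) 0 with hk0 | hk0
  · -- σ_k ≤ 0 : RHS nonpositive, LHS nonnegative
    have hLHS : 0 ≤ E (k - 1) * E l / ((n.choose (k - 1) : ℝ) * (n.choose l : ℝ)) := by
      apply div_nonneg
      · exact le_of_lt (mul_pos (hpos' (k - 1) le_rfl) (hpos' l (by omega)))
      · exact le_of_lt (mul_pos (hchoosepos _ (by omega)) (hchoosepos _ (by omega)))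
    have hnum : E k * E (l - 1) ≤ 0 := by
      have h1 := hpos' (l - 1) (by omega)
      nlinarith
    have hRHS : E k * E (l - 1) / ((n.choose k : ℝ) * (n.choose (l - 1) : ℝ)) ≤ 0 := by
      apply div_nonpos_of_nonpos_of_nonneg hnum
      exact le_of_lt (mul_pos (hchoosepos _ hkn) (hchoosepos _ (by omega)))
    linarith
  · -- σ_k > 0 : Newton–Maclaurin chain
    have hposk : ∀ j : ℕ, j ≤ k → 0 < E j := by
      intro j hj
      rcases eq_or_lt_of_le hj with rfl | h
      · exact hk0
      · exact hpos' j (by omega)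
    have hnewton : ∀ i : ℕ, i + 2 ≤ n →
        E i * E (i + 2) * ((n.choose (i + 1) : ℕ) : ℝ) ^ 2 ≤
          E (i + 1) ^ 2 * (((n.choose i : ℕ) : ℝ) * ((n.choose (i + 2) : ℕ) : ℝ)) := by
      intro i hi
      have hcard : Multiset.card (Multiset.map lam (Finset.univ : Finset (Fin n)).val) = n := by
        simp
      have h := my_newton n (Multiset.map lam (Finset.univ : Finset (Fin n)).val) hcard i hi
      have he : ∀ j : ℕ, (Multiset.map lam (Finset.univ : Finset (Fin n)).val).esymm j = E j := by
        intro j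
        rw [Finset.esymm_map_val]
      rw [he, he, he] at h
      exact h
    set p : ℕ → ℝ := fun j => E j / (n.choose j : ℝ) with hp
    have hppos : ∀ j : ℕ, j ≤ k → 0 < p j := by
      intro j hj
      exact div_pos (hposk j hj) (hchoosepos j (by omega))
    have pnewton : ∀ i : ℕ, i + 2 ≤ k → p i * p (i + 2) ≤ p (i + 1) ^ 2 := by
      intro i hi
      have h := hnewton i (le_trans hi hkn)
      rw [hp]
      simp only
      rw [div_mul_div_comm, div_pow, div_le_div_iff₀
        (mul_pos (hchoosepos i (by omega)) (hchoosepos (i + 2) (by omega)))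
        (pow_pos (hchoosepos (i + 1) (by omega)) 2)]
      nlinarith [h]
    have chain : ∀ d : ℕ, l + d ≤ k → p (l + d) * p (l - 1) ≤ p (l + d - 1) * p l := by
      intro d
      induction d with
      | zero =>
        intro _
        have i1 : l + 0 = l := by omega
        rw [i1, mul_comm]
      | succ d ihd =>
        intro h
        have ih := ihd (by omega)
        have hN := pnewton (l + d - 1) (by omega)
        have i1 : l + d - 1 + 1 = l + d := by omega
        have i2 : l + d - 1 + 2 = l + d + 1 := by omega
        rw [i1, i2] at hN
        have i3 : l + (d + 1) = l + d + 1 := by omega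
        have i4 : l + d + 1 - 1 = l + d := by omega
        rw [i3, i4]
        have h1 := hppos (l + d - 1) (by omega)
        have h2 := hppos (l + d) (by omega)
        have h3 := hppos (l - 1) (by omega)
        have h4 := hppos l (by omega)
        have h5 := hppos (l + d + 1) (by omega)
        nlinarith [mul_le_mul_of_nonneg_right hN (le_of_lt h3),
          mul_le_mul_of_nonneg_left ih (le_of_lt h2)]
    have hfinal := chain (k - l) (by omega)
    have i5 : l + (k - l) = k := by omega
    rw [i5] at hfinal
    have gl : E (k - 1) * E l / ((n.choose (k - 1) : ℝ) * (n.choose l : ℝ))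
        = p (k - 1) * p l := by
      rw [hp]; simp only; rw [div_mul_div_comm]
    have gr : E k * E (l - 1) / ((n.choose k : ℝ) * (n.choose (l - 1) : ℝ))
        = p k * p (l - 1) := by
      rw [hp]; simp only; rw [div_mul_div_comm]
    rw [ge_iff_le, gl, gr]
    exact hfinal
end

section
/- If λ ∈ Γ̃_k ⊂ ℝⁿ and 1 ≤ l < k ≤ n, then S_{k-1}(λ)S_l(λ)/(C(n+1,k−1)C(n+1,l)) ≥ S_k(λ)S_{l-1}(λ)/(C(n+1,k)C(n+1,l−1)), where S_j(λ) = σ_j(λ) + α σ_{j-1}(λ) with α ≥ 0. -/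
open Finset

open Polynomial

lemma deriv_step (s : Multiset ℝ) (hs : s.card ≠ 0) :
    ∃ t : Multiset ℝ, Multiset.card t = Multiset.card s - 1 ∧
      ∀ j : ℕ, j ≤ Multiset.card s - 1 →
        (Multiset.card s : ℝ) * t.esymm j = ((Multiset.card s : ℝ) - j) * s.esymm j := by
  set N := Multiset.card s with hN
  set p : ℝ[X] := (s.map fun a => X - C a).prod with hp
  have hmonic : p.Monic := monic_multiset_prod_of_monic _ _ fun a _ => monic_X_sub_C a
  have hdeg : p.natDegree = N := by
    rw [hp, natDegree_multiset_prod _ (by intro hq; simp only [Multiset.mem_map] at hq; obtain ⟨a,_,ha⟩ := hq; exact X_sub_C_ne_zero a ha)]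
    simp [Multiset.map_map, Function.comp]
    exact hN.symm
  have hN1 : 1 ≤ N := Nat.one_le_iff_ne_zero.2 hs
  have hroots : p.roots = s := roots_multiset_prod_X_sub_C s
  set q := derivative p with hq
  have hqcoeff : ∀ m : ℕ, q.coeff m = p.coeff (m + 1) * (m + 1) := fun m => coeff_derivative p m
  have hqlead : q.coeff (N - 1) = N := by
    rw [hqcoeff, Nat.sub_add_cancel hN1]
    have h2 := hmonic.coeff_natDegree
    rw [hdeg] at h2; rw [h2]
    have : ((N - 1 : ℕ) : ℝ) + 1 = N := by push_cast [Nat.cast_sub hN1]; ring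
    rw [this]; ring
  have hNne : (N : ℝ) ≠ 0 := Nat.cast_ne_zero.2 hs
  have hqne : q ≠ 0 := by
    intro h; rw [h] at hqlead; simp at hqlead; exact hNne hqlead.symm
  have hqdegle : q.natDegree ≤ N - 1 := by
    have := natDegree_derivative_le p; rw [hdeg] at this; exact this
  have hqdeg : q.natDegree = N - 1 :=
    le_antisymm hqdegle (le_natDegree_of_ne_zero (by rw [hqlead]; exact hNne))
  have hqlead' : q.leadingCoeff = N := by rw [Polynomial.leadingCoeff, hqdeg, hqlead]
  have hrc : Multiset.card q.roots = N - 1 := by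
    have h1 : Multiset.card q.roots ≤ N - 1 := hqdeg ▸ Polynomial.card_roots' q
    have h2 : N ≤ Multiset.card q.roots + 1 := by
      have := Polynomial.card_roots_le_derivative p
      rw [hroots] at this; exact this
    omega
  refine ⟨q.roots, hrc, fun j hj => ?_⟩
  have hm : (N - 1) - j ≤ q.natDegree := by omega
  have hc := Polynomial.coeff_eq_esymm_roots_of_card (hqdeg.symm ▸ hrc) hm
  have he1 : q.natDegree - ((N-1) - j) = j := by omega
  rw [he1, hqlead'] at hc
  have he2 : (N - 1) - j + 1 = N - j := by omega
  have hc2 := hqcoeff ((N-1) - j)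
  rw [he2] at hc2
  have hc3 := Multiset.prod_X_sub_C_coeff s (show N - j ≤ Multiset.card s by omega)
  have he3 : Multiset.card s - (N - j) = j := by omega
  rw [he3] at hc3
  rw [← hp] at hc3
  rw [hc3] at hc2
  have hcast : ((N - 1 - j : ℕ) : ℝ) + 1 = (N : ℝ) - j := by
    push_cast [Nat.cast_sub (by omega : j ≤ N - 1), Nat.cast_sub hN1]; ring
  rw [hcast] at hc2
  have hsgn : ((-1 : ℝ)^j) ≠ 0 := pow_ne_zero j (by norm_num)
  have e := hc2.symm.trans hc
  have key : (-1:ℝ)^j * ((N:ℝ) * Multiset.esymm q.roots j)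
      = (-1:ℝ)^j * (((N:ℝ) - j) * s.esymm j) := by linear_combination -e
  exact mul_left_cancel₀ hsgn key

lemma derivative_finset_prod {ι : Type*} [DecidableEq ι] (s : Finset ι) (f : ι → ℝ[X]) :
    derivative (∏ i ∈ s, f i) = ∑ i ∈ s, (∏ j ∈ s.erase i, f j) * derivative (f i) := by
  rw [Finset.prod_eq_multiset_prod, derivative_prod, Finset.sum_eq_multiset_sum]
  exact congr_arg Multiset.sum (Multiset.map_congr rfl fun i hi => by
    rw [← Finset.erase_val, ← Finset.prod_eq_multiset_prod])

lemma eval_zero_prod_X_sub_C {ι : Type*} (s : Finset ι) (x : ι → ℝ) :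
    (∏ i ∈ s, (X - C (x i))).eval 0 = (-1) ^ s.card * ∏ i ∈ s, x i := by
  rw [Polynomial.eval_prod]
  rw [← Finset.prod_const, ← Finset.prod_mul_distrib]
  apply Finset.prod_congr rfl
  intro i _
  simp

lemma newton_top (N : ℕ) (hN : 2 ≤ N) (x : Fin N → ℝ) :
    2 * N * ((univ.val.map x).esymm (N-2)) * ((univ.val.map x).esymm N)
      ≤ ((N : ℝ) - 1) * ((univ.val.map x).esymm (N-1))^2 := by
  set m : Multiset ℝ := univ.val.map x with hm
  have cardm : Multiset.card m = N := by simp [hm]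
  set p : ℝ[X] := ∏ i, (X - C (x i)) with hp
  have pm : p = (m.map fun a => X - C a).prod := by
    rw [hp, hm, Multiset.map_map, Finset.prod_eq_multiset_prod]; rfl
  have coeffp : ∀ j : ℕ, j ≤ N → p.coeff (N - j) = (-1)^j * m.esymm j := by
    intro j hj
    have := Multiset.prod_X_sub_C_coeff m (show N - j ≤ Multiset.card m by omega)
    rw [cardm] at this
    have hnj : N - (N - j) = j := by omega
    rw [hnj] at this
    rw [pm]; exact this
  set P : Fin N → ℝ := fun i => ∏ j ∈ univ.erase i, x j with hP
  set Q : Fin N → Fin N → ℝ := fun i j => ∏ k ∈ (univ.erase i).erase j, x k with hQ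
  have d1 : derivative p = ∑ i, ∏ j ∈ univ.erase i, (X - C (x j)) := by
    rw [hp, derivative_finset_prod]
    apply Finset.sum_congr rfl; intro i _
    simp
  have cerase : ∀ i : Fin N, (univ.erase i).card = N - 1 := by
    intro i; rw [Finset.card_erase_of_mem (mem_univ i)]; simp
  have cerase2 : ∀ (i j : Fin N), j ∈ univ.erase i → ((univ.erase i).erase j).card = N - 2 := by
    intro i j hj; rw [Finset.card_erase_of_mem hj, cerase]; omega
  have sumP : ∑ i, P i = m.esymm (N - 1) := by
    have e1 : (derivative p).coeff 0 = (-1:ℝ)^(N-1) * m.esymm (N-1) := by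
      rw [coeff_derivative]
      have h1 : (1 : ℕ) = N - (N - 1) := by omega
      rw [show p.coeff (0+1) = p.coeff (N - (N-1)) by rw [← h1], coeffp (N-1) (by omega)]
      push_cast; ring
    have e2 : (derivative p).coeff 0 = (-1:ℝ)^(N-1) * ∑ i, P i := by
      rw [coeff_zero_eq_eval_zero, d1, Polynomial.eval_finset_sum, Finset.mul_sum]
      apply Finset.sum_congr rfl; intro i _
      rw [eval_zero_prod_X_sub_C, cerase]
    have := e1.symm.trans e2
    exact (mul_left_cancel₀ (pow_ne_zero _ (by norm_num : (-1:ℝ) ≠ 0)) this).symm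
  have sumQ : ∑ i, ∑ j ∈ univ.erase i, Q i j = 2 * m.esymm (N - 2) := by
    have e1 : (derivative (derivative p)).coeff 0 = (-1:ℝ)^(N-2) * (2 * m.esymm (N-2)) := by
      rw [coeff_derivative, coeff_derivative]
      have h1 : (1 + 1 : ℕ) = N - (N - 2) := by omega
      rw [show p.coeff (0+1+1) = p.coeff (N - (N-2)) by rw [← h1], coeffp (N-2) (by omega)]
      push_cast; ring
    have e2 : (derivative (derivative p)).coeff 0
        = (-1:ℝ)^(N-2) * ∑ i, ∑ j ∈ univ.erase i, Q i j := by
      rw [d1, derivative_sum]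
      have : ∀ i : Fin N, derivative (∏ j ∈ univ.erase i, (X - C (x j)))
          = ∑ j ∈ univ.erase i, ∏ k ∈ (univ.erase i).erase j, (X - C (x k)) := by
        intro i; rw [derivative_finset_prod]
        apply Finset.sum_congr rfl; intro j _; simp
      rw [Finset.sum_congr rfl fun i _ => this i]
      rw [coeff_zero_eq_eval_zero, Polynomial.eval_finset_sum, Finset.mul_sum]
      apply Finset.sum_congr rfl; intro i _
      rw [Polynomial.eval_finset_sum, Finset.mul_sum]
      apply Finset.sum_congr rfl; intro j hj
      rw [eval_zero_prod_X_sub_C, cerase2 i j hj]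
    have := e1.symm.trans e2
    exact (mul_left_cancel₀ (pow_ne_zero _ (by norm_num : (-1:ℝ) ≠ 0)) this).symm
  have esymmN : m.esymm N = ∏ i, x i := by
    have e1 : p.coeff 0 = (-1:ℝ)^N * m.esymm N := by
      have h0 : (0:ℕ) = N - N := by omega
      rw [h0, coeffp N le_rfl]
    have e2 : p.coeff 0 = (-1:ℝ)^N * ∏ i, x i := by
      rw [coeff_zero_eq_eval_zero, hp, eval_zero_prod_X_sub_C]
      simp
    have := e1.symm.trans e2
    exact mul_left_cancel₀ (pow_ne_zero _ (by norm_num : (-1:ℝ) ≠ 0)) this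
  have prodid : ∀ i : Fin N, ∀ j ∈ univ.erase i, P i * P j = m.esymm N * Q i j := by
    intro i j hj
    have hji : j ≠ i := Finset.ne_of_mem_erase hj
    have hij : i ∈ univ.erase j := Finset.mem_erase.2 ⟨hji.symm, mem_univ i⟩
    have h1 : P i = x j * Q i j := (Finset.mul_prod_erase _ x hj).symm
    have h2 : P j = x i * Q j i := (Finset.mul_prod_erase _ x hij).symm
    have hQQ : Q j i = Q i j := by rw [hQ]; simp only; rw [Finset.erase_right_comm]
    have h3 : ∏ k, x k = x i * P i := (Finset.mul_prod_erase _ x (mem_univ i)).symm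
    rw [esymmN, h1, h2, hQQ, h3, h1]; ring
  have expand : (∑ i, P i)^2 = (∑ i, P i^2) + 2 * m.esymm (N-2) * m.esymm N := by
    rw [sq, Finset.sum_mul_sum]
    have : ∀ i : Fin N, ∑ j, P i * P j = P i^2 + ∑ j ∈ univ.erase i, P i * P j := by
      intro i
      rw [← Finset.add_sum_erase _ _ (mem_univ i), sq]
    rw [Finset.sum_congr rfl fun i _ => this i, Finset.sum_add_distrib]
    congr 1
    have e : ∑ i, ∑ j ∈ univ.erase i, P i * P j = m.esymm N * ∑ i, ∑ j ∈ univ.erase i, Q i j := by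
      rw [Finset.mul_sum]
      apply Finset.sum_congr rfl; intro i _
      rw [Finset.mul_sum]
      exact Finset.sum_congr rfl fun j hj => prodid i j hj
    rw [e, sumQ]; ring
  have CS : (∑ i, P i)^2 ≤ N * ∑ i, P i^2 := by
    have := sq_sum_le_card_mul_sum_sq (s := (univ : Finset (Fin N))) (f := P)
    simpa using this
  rw [sumP] at expand CS
  nlinarith [sq_nonneg (m.esymm (N-1))]

lemma exists_fn (s : Multiset ℝ) (N : ℕ) (h : Multiset.card s = N) :
    ∃ x : Fin N → ℝ, s = Multiset.map x univ.val := by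
  have hl : s.toList.length = N := by rw [Multiset.length_toList, h]
  subst hl
  refine ⟨s.toList.get, ?_⟩
  rw [Fin.univ_val_map, List.ofFn_get, Multiset.coe_toList]

lemma choose_id (n m : ℕ) (h : m ≤ n) :
    ((n+1 : ℕ) : ℝ) * (n.choose m) = ((n+1).choose m : ℝ) * (((n+1:ℕ) : ℝ) - m) := by
  have h1 : (n+1) * n.choose m = (n+1).choose (m+1) * (m+1) := Nat.add_one_mul_choose_eq n m
  have h2 : (n+1).choose (m+1) * (m+1) = (n+1).choose m * (n+1-m) := Nat.choose_succ_right_eq (n+1) m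
  have h3 : (n+1) * n.choose m = (n+1).choose m * (n+1-m) := h1.trans h2
  have := congrArg (Nat.cast (R := ℝ)) h3
  push_cast [Nat.cast_sub (by omega : m ≤ n+1)] at this
  convert this using 2 <;> push_cast <;> ring

set_option maxHeartbeats 1000000 in
lemma newtonM : ∀ N : ℕ, ∀ s : Multiset ℝ, Multiset.card s = N → ∀ j : ℕ, 1 ≤ j → j + 1 ≤ N →
    s.esymm (j-1) * s.esymm (j+1) * ((N.choose j : ℝ))^2
      ≤ (s.esymm j)^2 * ((N.choose (j-1) : ℝ) * (N.choose (j+1) : ℝ)) := by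
  intro N
  induction N with
  | zero => intro s _ j h1 h2; omega
  | succ n ih =>
    intro s hcard j h1 h2
    by_cases htop : j + 1 = n + 1
    · -- top case: j = n, N = n + 1
      obtain ⟨x, rfl⟩ := exists_fn s (n+1) hcard
      have hj : j = n := by omega
      subst hj
      have hN2 : 2 ≤ j + 1 := by omega
      have top := newton_top (j+1) hN2 x
      have e1 : j + 1 - 1 = j := by omega
      have e2 : j + 1 - 2 = j - 1 := by omega
      rw [e1, e2] at top
      have c1 : ((j+1).choose (j+1) : ℝ) = 1 := by norm_num
      have c2 : ((j+1).choose j : ℝ) = (j+1 : ℕ) := by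
        rw [show ((j+1).choose j) = ((j+1).choose (j+1-1)) by norm_num,
          Nat.choose_symm (by omega), Nat.choose_one_right]
      have c3 : (2 : ℝ) * ((j+1).choose (j-1)) = ((j:ℝ)+1) * j := by
        have hs : (j+1).choose (j-1) = (j+1).choose 2 := by
          rw [show j - 1 = (j+1) - 2 by omega, Nat.choose_symm (by omega)]
        have h4 : (j+1).choose 2 * 2 = (j+1) * (j+1-1) := by
          have := Nat.choose_succ_right_eq (j+1) 1
          rw [Nat.choose_one_right] at this; exact this
        rw [show j+1-1 = j by omega] at h4
        have := congrArg (Nat.cast (R := ℝ)) h4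
        push_cast [hs] at this ⊢
        linarith
      rw [c1, c2]
      have hC : ((j+1).choose (j-1) : ℝ) = ((j:ℝ)+1)*(j:ℝ)/2 := by linarith
      rw [hC]
      push_cast at top ⊢
      nlinarith [mul_le_mul_of_nonneg_left top (by positivity : (0:ℝ) ≤ ((j:ℝ)+1)/2)]
    · -- reduction step
      have hjn : j + 1 ≤ n := by omega
      obtain ⟨t, hct, hsc⟩ := deriv_step s (by omega)
      rw [hcard] at hct hsc
      simp only [Nat.add_sub_cancel] at hct hsc
      have IH := ih t hct j h1 hjn
      set rN : ℝ := ((n+1 : ℕ) : ℝ) with hrN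
      have E1 := hsc (j-1) (by omega)
      have E2 := hsc (j+1) (by omega)
      have E3 := hsc j (by omega)
      have F1 := choose_id n (j-1) (by omega)
      have F2 := choose_id n (j+1) (by omega)
      have F3 := choose_id n j (by omega)
      rw [← hrN] at F1 F2 F3
      set K : ℝ := (rN - j)^2 * ((rN - ((j-1:ℕ):ℝ)) * (rN - ((j+1:ℕ):ℝ))) with hK
      have g1 : (s.esymm (j-1) * s.esymm (j+1) * (((n+1).choose j : ℝ))^2) * K
          = rN^4 * (t.esymm (j-1) * t.esymm (j+1) * ((n.choose j : ℝ))^2) := by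
        have : rN^4 * (t.esymm (j-1) * t.esymm (j+1) * ((n.choose j : ℝ))^2)
            = (rN * t.esymm (j-1)) * (rN * t.esymm (j+1)) * (rN * (n.choose j : ℝ))^2 := by ring
        rw [this, E1, E2, F3, hK]; ring
      have g2 : ((s.esymm j)^2 * (((n+1).choose (j-1) : ℝ) * ((n+1).choose (j+1) : ℝ))) * K
          = rN^4 * ((t.esymm j)^2 * ((n.choose (j-1) : ℝ) * (n.choose (j+1) : ℝ))) := by
        have : rN^4 * ((t.esymm j)^2 * ((n.choose (j-1) : ℝ) * (n.choose (j+1) : ℝ)))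
            = (rN * t.esymm j)^2 * ((rN * (n.choose (j-1) : ℝ)) * (rN * (n.choose (j+1) : ℝ))) := by ring
        rw [this, E3, F1, F2, hK]; ring
      have hKpos : 0 < K := by
        have h8 : rN = (n:ℝ) + 1 := by rw [hrN]; push_cast; ring
        have hb : ((j+1:ℕ):ℝ) ≤ (n:ℝ) := by exact_mod_cast hjn
        have ha : ((j-1:ℕ):ℝ) ≤ ((j+1:ℕ):ℝ) := by
          have h9 : (j-1:ℕ) ≤ (j+1:ℕ) := by omega
          exact_mod_cast h9
        have hj7 : (j:ℝ) ≤ ((j+1:ℕ):ℝ) := by push_cast; linarith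
        have hb' : 0 < rN - ((j+1:ℕ):ℝ) := by rw [h8]; linarith
        have ha' : 0 < rN - ((j-1:ℕ):ℝ) := by linarith
        have hj8 : 0 < rN - (j:ℝ) := by linarith
        rw [hK]
        exact mul_pos (pow_pos hj8 2) (mul_pos ha' hb')
      have key := mul_le_mul_of_nonneg_left IH (by positivity : (0:ℝ) ≤ rN^4)
      rw [← g1, ← g2] at key
      exact le_of_mul_le_mul_right key hKpos

lemma esymm_cons (a : ℝ) (s : Multiset ℝ) (k : ℕ) :
    (a ::ₘ s).esymm (k+1) = s.esymm (k+1) + a * s.esymm k := by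
  rw [Multiset.esymm, Multiset.powersetCard_cons, Multiset.map_add, Multiset.sum_add]
  congr 1
  rw [Multiset.map_map, Multiset.esymm, ← Multiset.sum_map_mul_left]
  congr 1
  apply Multiset.map_congr rfl
  intro u _
  simp [Multiset.prod_cons]

lemma cons_map (n : ℕ) (lam : Fin n → ℝ) (a : ℝ) :
    Multiset.map (Fin.cons a lam : Fin (n+1) → ℝ) univ.val = a ::ₘ Multiset.map lam univ.val := by
  rw [Fin.univ_val_map, Fin.univ_val_map, List.ofFn_succ]
  simp [Fin.cons_zero, Fin.cons_succ]

lemma chain_ineq (p : ℕ → ℝ) (l : ℕ) (hl : 1 ≤ l) :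
    ∀ k : ℕ, l + 1 ≤ k → (∀ j, j ≤ k → 0 < p j) →
    (∀ j, l ≤ j → j < k → p (j+1) * p (j-1) ≤ p j ^ 2) →
    p k * p (l-1) ≤ p (k-1) * p l := by
  intro k hk
  induction k, hk using Nat.le_induction with
  | base =>
    intro hpos hnewton
    have := hnewton l le_rfl (by omega)
    rw [show l + 1 - 1 = l by omega]
    nlinarith [this]
  | succ k hk ih =>
    intro hpos hnewton
    have IH := ih (fun j hj => hpos j (by omega)) (fun j h1 h2 => hnewton j h1 (by omega))
    have hNw := hnewton k (by omega) (by omega)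
    rw [show k + 1 - 1 = k by omega]
    have hk1 : 0 < p (k-1) := hpos (k-1) (by omega)
    have hkpos : 0 < p k := hpos k (by omega)
    have hl1 : 0 < p (l-1) := hpos (l-1) (by omega)
    have h3 : (p (k+1) * p (l-1)) * p (k-1) ≤ (p k * p l) * p (k-1) := by
      nlinarith [mul_le_mul_of_nonneg_right hNw (le_of_lt hl1),
        mul_le_mul_of_nonneg_left IH (le_of_lt hkpos)]
    exact le_of_mul_le_mul_right h3 hk1


lemma esym_eq_esymm (n : ℕ) (lam : Fin n → ℝ) (j : ℕ) :
    esym n (j : ℤ) lam = (Multiset.map lam univ.val).esymm j := by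
  rw [esym, if_pos (Int.natCast_nonneg j), Int.toNat_natCast]
  exact (Finset.esymm_map_val lam univ j).symm

theorem stmt6 (n : ℕ) (α : ℝ) (hα : 0 ≤ α) (k l : ℕ) (hl : 1 ≤ l) (hlk : l < k) (hkn : k ≤ n)
    (lam : Fin n → ℝ) (hlam : lam ∈ GammaTilde n α k) :
    sumHess n α ((k : ℤ) - 1) lam * sumHess n α (l : ℤ) lam
        / (((n + 1).choose (k - 1) : ℝ) * ((n + 1).choose l : ℝ))
      ≥ sumHess n α (k : ℤ) lam * sumHess n α ((l : ℤ) - 1) lam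
        / (((n + 1).choose k : ℝ) * ((n + 1).choose (l - 1) : ℝ)) := by
  obtain ⟨hG, hSk⟩ := hlam
  have hk2 : 2 ≤ k := by omega
  set m : Multiset ℝ := Multiset.map (Fin.cons α lam : Fin (n+1) → ℝ) univ.val with hm
  have hcardm : Multiset.card m = n + 1 := by simp [hm]
  have Sv_eq : ∀ j : ℕ, m.esymm j = sumHess n α (j : ℤ) lam := by
    intro j
    cases j with
    | zero =>
      have h1 : m.esymm 0 = 1 := by
        simp [Multiset.esymm, Multiset.powersetCard_zero_left]
      have h2 : esym n (0 : ℤ) lam = 1 := by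
        simp [esym, Finset.powersetCard_zero]
      have h3 : esym n ((0:ℤ) - 1) lam = 0 := by
        rw [esym, if_neg (by norm_num)]
      rw [h1, sumHess]; rw [show ((0:ℕ):ℤ) = (0:ℤ) by norm_num, h2, h3]; ring
    | succ i =>
      rw [hm, cons_map, esymm_cons, sumHess]
      rw [show ((i+1:ℕ):ℤ) - 1 = ((i:ℕ):ℤ) by push_cast; ring]
      rw [esym_eq_esymm n lam (i+1), esym_eq_esymm n lam i]
  have hEpos : ∀ j : ℤ, 1 ≤ j → j ≤ ((k:ℤ) - 1) → 0 < esym n j lam := by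
    intro j h1 h2
    exact hG j h1 (by push_cast; omega)
  have hpos : ∀ j : ℕ, j ≤ k → 0 < m.esymm j := by
    intro j hj
    rcases Nat.eq_or_lt_of_le (Nat.zero_le j) with h0 | h1
    · rw [← h0, Sv_eq]
      rw [sumHess]
      have h2 : esym n ((0:ℕ) : ℤ) lam = 1 := by simp [esym, Finset.powersetCard_zero]
      have h3 : esym n (((0:ℕ):ℤ) - 1) lam = 0 := by rw [esym, if_neg (by norm_num)]
      rw [h2, h3]; norm_num
    · rcases Nat.eq_or_lt_of_le hj with rfl | hjk
      · rw [Sv_eq]; exact hSk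
      · -- 1 ≤ j ≤ k - 1
        rw [Sv_eq, sumHess]
        have hj1 : 0 < esym n ((j:ℕ):ℤ) lam := hEpos _ (by exact_mod_cast h1) (by omega)
        have hj2 : 0 ≤ esym n (((j:ℕ):ℤ) - 1) lam := by
          rcases Nat.eq_or_lt_of_le h1 with h4 | h4
          · have : ((j:ℕ):ℤ) - 1 = 0 := by omega
            rw [this]
            have : esym n (0 : ℤ) lam = 1 := by simp [esym, Finset.powersetCard_zero]
            rw [this]; norm_num
          · exact le_of_lt (hEpos _ (by omega) (by omega))
        nlinarith
  set p : ℕ → ℝ := fun j => m.esymm j / (((n+1).choose j : ℕ) : ℝ) with hp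
  have hcpos : ∀ j : ℕ, j ≤ k → (0:ℝ) < (((n+1).choose j : ℕ) : ℝ) := by
    intro j hj
    exact_mod_cast Nat.choose_pos (by omega : j ≤ n + 1)
  have hppos : ∀ j : ℕ, j ≤ k → 0 < p j := by
    intro j hj
    exact div_pos (hpos j hj) (hcpos j hj)
  have hnewton : ∀ j : ℕ, l ≤ j → j < k → p (j+1) * p (j-1) ≤ p j ^ 2 := by
    intro j h1 h2
    have NT := newtonM (n+1) m hcardm j (by omega) (by omega)
    rw [hp]
    simp only
    rw [div_mul_div_comm, div_pow, div_le_div_iff₀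
      (mul_pos (hcpos (j+1) (by omega)) (hcpos (j-1) (by omega)))
      (pow_pos (hcpos j (by omega)) 2)]
    calc m.esymm (j+1) * m.esymm (j-1) * (((n+1).choose j : ℕ):ℝ)^2
        = m.esymm (j-1) * m.esymm (j+1) * (((n+1).choose j : ℕ):ℝ)^2 := by ring
      _ ≤ m.esymm j ^2 * ((((n+1).choose (j-1) : ℕ):ℝ) * (((n+1).choose (j+1) : ℕ):ℝ)) := NT
      _ = m.esymm j ^2 * ((((n+1).choose (j+1) : ℕ):ℝ) * (((n+1).choose (j-1) : ℕ):ℝ)) := by ring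
  have hchain := chain_ineq p l hl k (by omega) hppos hnewton
  rw [ge_iff_le]
  have ek : sumHess n α ((k:ℤ) - 1) lam = m.esymm (k-1) := by
    rw [show (k:ℤ) - 1 = (((k-1:ℕ)):ℤ) by push_cast [Nat.cast_sub (by omega : 1 ≤ k)]; ring]
    exact (Sv_eq (k-1)).symm
  have el : sumHess n α ((l:ℤ) - 1) lam = m.esymm (l-1) := by
    rw [show (l:ℤ) - 1 = (((l-1:ℕ)):ℤ) by push_cast [Nat.cast_sub (by omega : 1 ≤ l)]; ring]
    exact (Sv_eq (l-1)).symm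
  rw [ek, el, ← Sv_eq k, ← Sv_eq l]
  have lhs_eq : m.esymm k * m.esymm (l-1) / (((n + 1).choose k : ℝ) * ((n + 1).choose (l-1) : ℝ))
      = p k * p (l-1) := by rw [hp]; simp only; rw [div_mul_div_comm]
  have rhs_eq : m.esymm (k-1) * m.esymm l / (((n + 1).choose (k-1) : ℝ) * ((n + 1).choose l : ℝ))
      = p (k-1) * p l := by rw [hp]; simp only; rw [div_mul_div_comm]
  rw [lhs_eq, rhs_eq]
  exact hchain
end

section
/- If λ ∈ Γ̃_k with λ₁ ≥ λ₂ ≥ ⋯ ≥ λₙ, then λ_{k-1} > 0 and S_{k-1}(λ|n) ≥ S_{k-1}(λ|n−1) ≥ ⋯ ≥ S_{k-1}(λ|1) > 0. -/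
set_option linter.unusedSectionVars false
set_option maxHeartbeats 1000000

open Finset

section Aux
variable {ι : Type*} [DecidableEq ι]



noncomputable def EE (x : ι → ℝ) (j : ℕ) (A : Finset ι) : ℝ :=
  ∑ s ∈ A.powersetCard j, ∏ t ∈ s, x t

lemma EE_zero (x : ι → ℝ) (A : Finset ι) : EE x 0 A = 1 := by
  simp [EE]

lemma EE_eq_zero {j : ℕ} {A : Finset ι} (x : ι → ℝ) (h : A.card < j) : EE x j A = 0 := by
  simp [EE, Finset.powersetCard_eq_empty.2 h]

lemma EE_erase {i : ι} {A : Finset ι} (hi : i ∈ A) (x : ι → ℝ) (j : ℕ) :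
    EE x (j+1) A = EE x (j+1) (A.erase i) + x i * EE x j (A.erase i) := by
  have h2 : i ∉ A.erase i := Finset.notMem_erase _ _
  have h1 : A = insert i (A.erase i) := (Finset.insert_erase hi).symm
  have hdisj : Disjoint ((A.erase i).powersetCard (j+1))
      (((A.erase i).powersetCard j).image (insert i)) := by
    rw [Finset.disjoint_right]
    intro s hs hs'
    simp only [Finset.mem_image] at hs
    obtain ⟨u, hu, rfl⟩ := hs
    have := (Finset.mem_powersetCard.1 hs').1 (Finset.mem_insert_self i u)
    exact h2 this
  have hinj : Set.InjOn (insert i) (((A.erase i).powersetCard j) : Set (Finset ι)) := by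
    intro u hu v hv huv
    have hiu : i ∉ u := fun h => h2 ((Finset.mem_powersetCard.1 hu).1 h)
    have hiv : i ∉ v := fun h => h2 ((Finset.mem_powersetCard.1 hv).1 h)
    have : (insert i u).erase i = (insert i v).erase i := by rw [huv]
    rwa [Finset.erase_insert hiu, Finset.erase_insert hiv] at this
  conv_lhs => rw [EE, h1, Finset.powersetCard_succ_insert h2, Finset.sum_union hdisj,
    Finset.sum_image hinj]
  rw [EE, EE, Finset.mul_sum]
  congr 1
  refine Finset.sum_congr rfl fun u hu => ?_
  have hiu : i ∉ u := fun h => h2 ((Finset.mem_powersetCard.1 hu).1 h)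
  rw [Finset.prod_insert hiu]


lemma EE_sum (x : ι → ℝ) (j : ℕ) (A : Finset ι) :
    ∑ m ∈ A, x m * EE x j (A.erase m) = (j+1 : ℝ) * EE x (j+1) A := by
  have lhs : ∑ m ∈ A, x m * EE x j (A.erase m)
      = ∑ p ∈ A.sigma (fun m => (A.erase m).powersetCard j), ∏ t ∈ insert p.1 p.2, x t := by
    rw [Finset.sum_sigma]
    refine Finset.sum_congr rfl fun m hm => ?_
    rw [EE, Finset.mul_sum]
    refine Finset.sum_congr rfl fun s hs => ?_
    have hms : m ∉ s := fun h => (Finset.notMem_erase m A) ((Finset.mem_powersetCard.1 hs).1 h)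
    rw [Finset.prod_insert hms]
  have rhs : (j+1 : ℝ) * EE x (j+1) A
      = ∑ p ∈ (A.powersetCard (j+1)).sigma (fun t => t), ∏ u ∈ p.1, x u := by
    rw [Finset.sum_sigma, EE, Finset.mul_sum]
    refine Finset.sum_congr rfl fun s hs => ?_
    simp only [Finset.sum_const, nsmul_eq_mul]
    rw [(Finset.mem_powersetCard.1 hs).2]
    push_cast
    ring
  rw [lhs, rhs]
  refine Finset.sum_bij' (fun p _ => (⟨insert p.1 p.2, p.1⟩ : (_ : Finset ι) × ι))
    (fun q _ => (⟨q.2, q.1.erase q.2⟩ : (_ : ι) × Finset ι)) ?_ ?_ ?_ ?_ ?_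
  · rintro ⟨m, s⟩ hp
    rw [Finset.mem_sigma] at hp
    obtain ⟨hm, hs⟩ := hp
    rw [Finset.mem_powersetCard] at hs
    have hms : m ∉ s := fun h => (Finset.notMem_erase m A) (hs.1 h)
    rw [Finset.mem_sigma, Finset.mem_powersetCard]
    refine ⟨⟨?_, ?_⟩, Finset.mem_insert_self _ _⟩
    · exact Finset.insert_subset hm (hs.1.trans (Finset.erase_subset _ _))
    · rw [Finset.card_insert_of_notMem hms, hs.2]
  · rintro ⟨t, m⟩ hq
    rw [Finset.mem_sigma] at hq
    obtain ⟨ht, hm⟩ := hq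
    rw [Finset.mem_powersetCard] at ht
    rw [Finset.mem_sigma, Finset.mem_powersetCard]
    refine ⟨ht.1 hm, Finset.erase_subset_erase _ ht.1, ?_⟩
    rw [Finset.card_erase_of_mem hm, ht.2]; omega
  · rintro ⟨m, s⟩ hp
    rw [Finset.mem_sigma] at hp
    have hms : m ∉ s := fun h =>
      (Finset.notMem_erase m A) ((Finset.mem_powersetCard.1 hp.2).1 h)
    simp [Finset.erase_insert hms]
  · rintro ⟨t, m⟩ hq
    rw [Finset.mem_sigma] at hq
    simp [Finset.insert_erase hq.2]
  · rintro ⟨m, s⟩ _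
    rfl


lemma EE_shift (x : ι → ℝ) (ε : ℝ) (j : ℕ) (A : Finset ι) (hj : j ≤ A.card) :
    EE (fun t => x t + ε) j A
      = ∑ r ∈ Finset.range (j+1), ((A.card - r).choose (j - r) : ℝ) * ε^(j-r) * EE x r A := by
  have count : ∀ u ∈ A.powerset, u.card ≤ j →
      (((A.powersetCard j).filter (fun s => u ⊆ s)).card : ℝ)
        = ((A.card - u.card).choose (j - u.card) : ℝ) := by
    intro u hu hcard
    have huA : u ⊆ A := Finset.mem_powerset.1 hu
    have hAu : (A \ u).card = A.card - u.card := Finset.card_sdiff_of_subset huA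
    have : ((A.powersetCard j).filter (fun s => u ⊆ s)).card
        = ((A \ u).powersetCard (j - u.card)).card := by
      refine Finset.card_nbij' (fun s => s \ u) (fun s' => u ∪ s') ?_ ?_ ?_ ?_
      · intro s hs
        rw [Finset.mem_coe, Finset.mem_filter, Finset.mem_powersetCard] at hs
        rw [Finset.mem_coe, Finset.mem_powersetCard]
        exact ⟨Finset.sdiff_subset_sdiff hs.1.1 (Finset.Subset.refl u),
          by rw [Finset.card_sdiff_of_subset hs.2, hs.1.2]⟩
      · intro s' hs'
        rw [Finset.mem_coe, Finset.mem_powersetCard] at hs'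
        have hdisj : Disjoint u s' := by
          have := hs'.1
          rw [Finset.subset_sdiff] at this
          exact this.2.symm
        rw [Finset.mem_coe, Finset.mem_filter, Finset.mem_powersetCard]
        refine ⟨⟨Finset.union_subset huA (hs'.1.trans (Finset.sdiff_subset)), ?_⟩,
          Finset.subset_union_left⟩
        rw [Finset.card_union_of_disjoint hdisj, hs'.2]
        omega
      · intro s hs
        rw [Finset.mem_coe, Finset.mem_filter] at hs
        exact Finset.union_sdiff_of_subset hs.2
      · intro s' hs'
        rw [Finset.mem_coe, Finset.mem_powersetCard] at hs'
        have hdisj : Disjoint u s' := by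
          have := hs'.1
          rw [Finset.subset_sdiff] at this
          exact this.2.symm
        exact Finset.union_sdiff_cancel_left hdisj
    rw [this, Finset.card_powersetCard, hAu]
  have count0 : ∀ u ∈ A.powerset, j < u.card →
      ((A.powersetCard j).filter (fun s => u ⊆ s)) = ∅ := by
    intro u _ hcard
    rw [Finset.filter_eq_empty_iff]
    intro s hs hus
    have := Finset.card_le_card hus
    rw [(Finset.mem_powersetCard.1 hs).2] at this
    omega
  calc EE (fun t => x t + ε) j A
      = ∑ s ∈ A.powersetCard j, ∑ u ∈ s.powerset, (∏ t ∈ u, x t) * ε^(j - u.card) := by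
        rw [EE]
        refine Finset.sum_congr rfl fun s hs => ?_
        rw [Finset.prod_add]
        refine Finset.sum_congr rfl fun u hu => ?_
        congr 1
        rw [Finset.prod_const]
        congr 1
        rw [Finset.card_sdiff_of_subset (Finset.mem_powerset.1 hu), (Finset.mem_powersetCard.1 hs).2]
    _ = ∑ u ∈ A.powerset, ∑ s ∈ (A.powersetCard j).filter (fun s => u ⊆ s),
          (∏ t ∈ u, x t) * ε^(j - u.card) := by
        refine Finset.sum_comm' ?_
        intro s u
        simp only [Finset.mem_powerset, Finset.mem_filter, Finset.mem_powersetCard]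
        constructor
        · rintro ⟨⟨hsA, hsc⟩, hus⟩
          exact ⟨⟨⟨hsA, hsc⟩, hus⟩, hus.trans hsA⟩
        · rintro ⟨⟨⟨hsA, hsc⟩, hus⟩, _⟩
          exact ⟨⟨hsA, hsc⟩, hus⟩
    _ = ∑ u ∈ A.powerset,
          (((A.powersetCard j).filter (fun s => u ⊆ s)).card : ℝ)
            * ((∏ t ∈ u, x t) * ε^(j - u.card)) := by
        refine Finset.sum_congr rfl fun u hu => ?_
        rw [Finset.sum_const, nsmul_eq_mul]
    _ = ∑ r ∈ Finset.range (A.card + 1), ∑ u ∈ A.powersetCard r,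
          (((A.powersetCard j).filter (fun s => u ⊆ s)).card : ℝ)
            * ((∏ t ∈ u, x t) * ε^(j - u.card)) := Finset.sum_powerset _ _
    _ = ∑ r ∈ Finset.range (j + 1), ∑ u ∈ A.powersetCard r,
          (((A.powersetCard j).filter (fun s => u ⊆ s)).card : ℝ)
            * ((∏ t ∈ u, x t) * ε^(j - u.card)) := by
        refine (Finset.sum_subset (by rw [Finset.range_subset_range]; omega) ?_).symm
        intro r hr hr'
        rw [Finset.mem_range] at hr hr'
        refine Finset.sum_eq_zero fun u hu => ?_
        have huc : u.card = r := (Finset.mem_powersetCard.1 hu).2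
        have : j < u.card := by omega
        rw [count0 u (Finset.mem_powerset.2 (Finset.mem_powersetCard.1 hu).1) this]
        simp
    _ = ∑ r ∈ Finset.range (j+1), ((A.card - r).choose (j - r) : ℝ) * ε^(j-r) * EE x r A := by
        refine Finset.sum_congr rfl fun r hr => ?_
        rw [Finset.mem_range] at hr
        rw [EE, Finset.mul_sum]
        refine Finset.sum_congr rfl fun u hu => ?_
        have huc : u.card = r := (Finset.mem_powersetCard.1 hu).2
        rw [count u (Finset.mem_powerset.2 (Finset.mem_powersetCard.1 hu).1) (by omega), huc]
        ring

lemma EE_smul (c : ℝ) (x : ι → ℝ) (j : ℕ) (A : Finset ι) :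
    EE (fun t => c * x t) j A = c^j * EE x j A := by
  rw [EE, EE, Finset.mul_sum]
  refine Finset.sum_congr rfl fun s hs => ?_
  rw [Finset.prod_mul_distrib, Finset.prod_const, (Finset.mem_powersetCard.1 hs).2]

lemma EE_cont_shift (x : ι → ℝ) (j : ℕ) (A : Finset ι) :
    Continuous fun ε : ℝ => EE (fun t => x t + ε) j A := by
  unfold EE
  refine continuous_finset_sum _ fun s _ => continuous_finset_prod _ fun t _ => ?_
  fun_prop

lemma EE_cont_path (x : ι → ℝ) (j : ℕ) (A : Finset ι) :
    Continuous fun s : ℝ => EE (fun t => (1-s) * x t + s) j A := by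
  unfold EE
  refine continuous_finset_sum _ fun u _ => continuous_finset_prod _ fun t _ => ?_
  fun_prop


lemma EE_shift_pos {x : ι → ℝ} {A : Finset ι} {j : ℕ} (hj : j ≤ A.card)
    (h : ∀ r, r ≤ j → 0 ≤ EE x r A) {ε : ℝ} (hε : 0 < ε) :
    0 < EE (fun t => x t + ε) j A := by
  rw [EE_shift x ε j A hj]
  refine Finset.sum_pos' (fun r hr => ?_) ⟨0, Finset.mem_range.2 (by omega), ?_⟩
  · rw [Finset.mem_range] at hr
    exact mul_nonneg (mul_nonneg (Nat.cast_nonneg _) (pow_nonneg hε.le _)) (h r (by omega))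
  · simp only [Nat.sub_zero, EE_zero, mul_one]
    have hchoose : 0 < (A.card.choose j : ℝ) := by exact_mod_cast Nat.choose_pos hj
    positivity

lemma EE_path_pos {x : ι → ℝ} {A : Finset ι} {k : ℕ} (h : ∀ r, r ≤ k → 0 < EE x r A)
    (hk : k ≤ A.card) {s : ℝ} (hs0 : 0 ≤ s) (hs1 : s ≤ 1) :
    ∀ j, j ≤ k → 0 < EE (fun t => (1-s) * x t + s) j A := by
  intro j hj
  have key : EE (fun t => (1-s) * x t + s) j A
      = ∑ r ∈ Finset.range (j+1),
          ((A.card - r).choose (j - r) : ℝ) * s^(j-r) * ((1-s)^r * EE x r A) := by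
    rw [EE_shift (fun t => (1-s) * x t) s j A (hj.trans hk)]
    refine Finset.sum_congr rfl fun r _ => ?_
    rw [EE_smul]
  rw [key]
  have h1s : (0:ℝ) ≤ 1 - s := by linarith
  have hterm : ∀ r ∈ Finset.range (j+1),
      0 ≤ ((A.card - r).choose (j - r) : ℝ) * s^(j-r) * ((1-s)^r * EE x r A) := by
    intro r hr
    rw [Finset.mem_range] at hr
    exact mul_nonneg (mul_nonneg (Nat.cast_nonneg _) (pow_nonneg hs0 _))
      (mul_nonneg (pow_nonneg h1s _) (h r (by omega)).le)
  rcases eq_or_lt_of_le hs0 with hs | hs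
  · refine Finset.sum_pos' hterm ⟨j, Finset.mem_range.2 (by omega), ?_⟩
    rw [← hs]
    simp only [Nat.sub_self, pow_zero, sub_zero, one_pow, Nat.choose_zero_right,
      Nat.cast_one, one_mul, mul_one]
    exact h j hj
  · refine Finset.sum_pos' hterm ⟨0, Finset.mem_range.2 (by omega), ?_⟩
    simp only [Nat.sub_zero, pow_zero, one_mul, EE_zero, mul_one]
    have hchoose : 0 < (A.card.choose j : ℝ) := by
      exact_mod_cast Nat.choose_pos (hj.trans hk)
    positivity

lemma EE_neg_del {x : ι → ℝ} {A : Finset ι} {r : ℕ} (h : ∀ j, j ≤ r → 0 < EE x j A)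
    {i : ι} (hi : i ∈ A) (hxi : x i ≤ 0) : ∀ j, j ≤ r → 0 < EE x j (A.erase i) := by
  intro j
  induction j with
  | zero => intro _; rw [EE_zero]; norm_num
  | succ m ih =>
    intro hm
    have h1 := EE_erase hi x m
    have h2 := ih (by omega)
    have h3 : x i * EE x m (A.erase i) ≤ 0 :=
      mul_nonpos_iff.2 (Or.inr ⟨hxi, h2.le⟩)
    have h4 := h (m+1) hm
    linarith

lemma closure_of_gard {k : ℕ}
    (IH : ∀ (x : ι → ℝ) (A : Finset ι), (∀ j, j ≤ k → 0 < EE x j A) →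
      ∀ i ∈ A, ∀ j, j ≤ k - 1 → 0 < EE x j (A.erase i))
    {x : ι → ℝ} {B : Finset ι} (h : ∀ j, j ≤ k → 0 ≤ EE x j B) (hcard : k ≤ B.card)
    {i : ι} (hi : i ∈ B) : ∀ j, j ≤ k - 1 → 0 ≤ EE x j (B.erase i) := by
  intro j hj
  have key : ∀ ε : ℝ, 0 < ε → 0 < EE (fun t => x t + ε) j (B.erase i) := by
    intro ε hε
    exact IH (fun t => x t + ε) B (fun j' hj' => EE_shift_pos (hj'.trans hcard)
      (fun r hr => h r (hr.trans hj')) hε) i hi j hj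
  have hc : Continuous (fun ε : ℝ => EE (fun t => x t + ε) j (B.erase i)) :=
    EE_cont_shift x j (B.erase i)
  have h0 : EE (fun t => x t + (0:ℝ)) j (B.erase i) = EE x j (B.erase i) := by simp
  have ht : Filter.Tendsto (fun ε : ℝ => EE (fun t => x t + ε) j (B.erase i))
      (nhdsWithin 0 (Set.Ioi 0)) (nhds (EE x j (B.erase i))) := by
    rw [← h0]
    exact (hc.tendsto 0).mono_left nhdsWithin_le_nhds
  exact ge_of_tendsto ht (eventually_nhdsWithin_of_forall fun ε hε => (key ε hε).le)

lemma nonvanish_of_gard {k : ℕ}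
    (IH : ∀ (x : ι → ℝ) (A : Finset ι), (∀ j, j ≤ k → 0 < EE x j A) →
      ∀ i ∈ A, ∀ j, j ≤ k - 1 → 0 < EE x j (A.erase i))
    {x : ι → ℝ} {A : Finset ι} (h : ∀ j, j ≤ k + 1 → 0 < EE x j A)
    {i : ι} (hi : i ∈ A) : EE x k (A.erase i) ≠ 0 := by
  rcases Nat.eq_zero_or_pos k with rfl | hk
  · rw [EE_zero]; norm_num
  obtain ⟨m, rfl⟩ : ∃ m, k = m + 1 := ⟨k - 1, by omega⟩
  intro h0
  have hAcard : m + 2 ≤ A.card := by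
    by_contra hc
    push_neg at hc
    have hz := EE_eq_zero x (show A.card < m+2 by omega)
    have h2 := h (m+2) le_rfl
    rw [hz] at h2
    exact lt_irrefl _ h2
  have hBcard : (A.erase i).card = A.card - 1 := Finset.card_erase_of_mem hi
  have hBpos : ∀ j, j ≤ m → 0 < EE x j (A.erase i) := by
    have := IH x A (fun j hj => h j (by omega)) i hi
    intro j hj
    exact this j (by omega)
  have hBnn : ∀ j, j ≤ m + 1 → 0 ≤ EE x j (A.erase i) := by
    intro j hj
    rcases eq_or_lt_of_le hj with rfl | hlt
    · rw [h0]
    · exact (hBpos j (by omega)).le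
  have hcl : ∀ p ∈ A.erase i, 0 ≤ EE x m ((A.erase i).erase p) := by
    intro p hp
    exact closure_of_gard IH hBnn (by omega) hp m (by omega)
  have hterm : ∀ p ∈ A.erase i,
      x p * EE x (m+1) ((A.erase i).erase p) = -(x p ^ 2 * EE x m ((A.erase i).erase p)) := by
    intro p hp
    have hid := EE_erase hp x m
    rw [h0] at hid
    have : EE x (m+1) ((A.erase i).erase p) = -(x p * EE x m ((A.erase i).erase p)) := by
      linarith
    rw [this]
    ring
  have hsum := EE_sum x (m+1) (A.erase i)
  rw [Finset.sum_congr rfl hterm] at hsum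
  have hsleft : ∑ p ∈ A.erase i, -(x p ^ 2 * EE x m ((A.erase i).erase p)) ≤ 0 := by
    refine Finset.sum_nonpos fun p hp => ?_
    have := mul_nonneg (sq_nonneg (x p)) (hcl p hp)
    linarith
  have hpos : (0:ℝ) < (m+1 : ℕ) + 1 := by positivity
  have hEB : EE x (m+1+1) (A.erase i) ≤ 0 := by
    rw [hsum] at hsleft
    nlinarith
  have hfin := EE_erase hi x (m+1)
  rw [h0] at hfin
  have h2 := h (m+2) le_rfl
  have : EE x (m+2) A ≤ 0 := by
    rw [hfin]
    simpa using hEB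
  linarith

lemma gard : ∀ (k : ℕ) (x : ι → ℝ) (A : Finset ι), (∀ j, j ≤ k → 0 < EE x j A) →
    ∀ i ∈ A, ∀ j, j ≤ k - 1 → 0 < EE x j (A.erase i) := by
  intro k
  induction k with
  | zero =>
    intro x A h i hi j hj
    interval_cases j
    rw [EE_zero]
    norm_num
  | succ k IH =>
    intro x A h i hi j hj
    have hjk : j ≤ k := by omega
    have hcard : k + 1 ≤ A.card := by
      by_contra hc
      push_neg at hc
      have hz := EE_eq_zero x (show A.card < k+1 by omega)
      have h2 := h (k+1) le_rfl
      rw [hz] at h2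
      exact lt_irrefl _ h2
    by_cases hjke : j = k
    · subst hjke
      have hpath : ∀ s : ℝ, 0 ≤ s → s ≤ 1 → ∀ j', j' ≤ j+1 →
          0 < EE (fun t => (1-s)*x t + s) j' A :=
        fun s hs0 hs1 => EE_path_pos h hcard hs0 hs1
      set g : ℝ → ℝ := fun s => EE (fun t => (1-s)*x t + s) j (A.erase i) with hg
      have hnv : ∀ s : ℝ, 0 ≤ s → s ≤ 1 → g s ≠ 0 := fun s hs0 hs1 =>
        nonvanish_of_gard IH (hpath s hs0 hs1) hi
      have hg1 : g 1 = ((A.card - 1).choose j : ℝ) := by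
        have hfun : (fun t : ι => (1-(1:ℝ))*x t + 1) = fun _ => (1:ℝ) := by
          funext t; ring
        rw [hg]
        simp only [hfun]
        rw [EE]
        simp [Finset.card_erase_of_mem hi]
      have hg1pos : 0 < g 1 := by
        rw [hg1]
        exact_mod_cast Nat.choose_pos (by omega : j ≤ A.card - 1)
      have hg0 : g 0 = EE x j (A.erase i) := by
        have hfun : (fun t : ι => (1-(0:ℝ))*x t + 0) = x := by funext t; ring
        rw [hg]
        simp only [hfun]
      by_contra hle
      push_neg at hle
      have hg0lt : g 0 < 0 := by
        rcases eq_or_lt_of_le hle with heq | hlt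
        · exact absurd (hg0.trans heq) (hnv 0 le_rfl zero_le_one)
        · rw [hg0]; exact hlt
      have hcont : ContinuousOn g (Set.Icc 0 1) :=
        (EE_cont_path x j (A.erase i)).continuousOn
      have hmem : (0:ℝ) ∈ Set.Icc (g 0) (g 1) := ⟨hg0lt.le, hg1pos.le⟩
      obtain ⟨s, hs, hgs⟩ := intermediate_value_Icc (zero_le_one : (0:ℝ) ≤ 1) hcont hmem
      exact hnv s hs.1 hs.2 hgs
    · exact IH x A (fun j' hj' => h j' (by omega)) i hi j (by omega)


lemma EE_del_finset {x : ι → ℝ} {A : Finset ι} {r : ℕ} (h : ∀ j, j ≤ r → 0 < EE x j A) :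
    ∀ T : Finset ι, (∀ i ∈ T, x i ≤ 0) → ∀ j, j ≤ r → 0 < EE x j (A \ T) := by
  intro T
  induction T using Finset.induction_on with
  | empty =>
    intro _ j hj
    simpa [Finset.sdiff_empty] using h j hj
  | @insert a T hna ih =>
    intro hneg j hj
    have hsd : A \ insert a T = (A \ T).erase a := Finset.sdiff_insert A T a
    rw [hsd]
    have ihT := ih (fun i hi => hneg i (Finset.mem_insert_of_mem hi))
    by_cases haT : a ∈ A \ T
    · exact EE_neg_del ihT haT (hneg a (Finset.mem_insert_self a T)) j hj
    · rw [Finset.erase_eq_of_notMem haT]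
      exact ihT j hj


lemma EE_map {κ : Type*} [DecidableEq κ] (f : κ ↪ ι) (x : ι → ℝ) (j : ℕ) (B : Finset κ) :
    EE x j (B.map f) = EE (fun t => x (f t)) j B := by
  rw [EE, EE, Finset.powersetCard_map, Finset.sum_map]
  refine Finset.sum_congr rfl fun s _ => ?_
  rw [show (Finset.mapEmbedding f).toEmbedding s = s.map f from rfl, Finset.prod_map]

end Aux

lemma esym_eq (n : ℕ) (j : ℕ) (lam : Fin n → ℝ) :
    esym n (j:ℤ) lam = EE lam j Finset.univ := by
  rw [esym, if_pos (by exact_mod_cast Nat.zero_le j : (0:ℤ) ≤ (j:ℤ))]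
  rfl

lemma esymDel_eq (n : ℕ) (j : ℕ) (p : Fin n) (lam : Fin n → ℝ) :
    esymDel n (j:ℤ) p lam = EE lam j (Finset.univ.erase p) := by
  rw [esymDel, if_pos (by exact_mod_cast Nat.zero_le j : (0:ℤ) ≤ (j:ℤ))]
  rfl

theorem stmt9 (n : ℕ) (α : ℝ) (hα : 0 ≤ α) (k : ℕ) (hk : 2 ≤ k) (hkn : k ≤ n)
    (lam : Fin n → ℝ) (hlam : lam ∈ GammaTilde n α k)
    (hsort : ∀ i j : Fin n, i ≤ j → lam j ≤ lam i) :
    0 < lam (⟨k - 2, by omega⟩ : Fin n) ∧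
    (∀ i j : Fin n, i ≤ j →
      sumHessDel n α ((k : ℤ) - 1) i lam ≤ sumHessDel n α ((k : ℤ) - 1) j lam) ∧
    0 < sumHessDel n α ((k : ℤ) - 1) (⟨0, by omega⟩ : Fin n) lam := by
  classical
  obtain ⟨hGamma, hSpos⟩ := hlam
  have hGamFull : ∀ j, j ≤ k - 1 → 0 < EE lam j (Finset.univ : Finset (Fin n)) := by
    intro j hj
    rcases Nat.eq_zero_or_pos j with rfl | hj1
    · rw [EE_zero]; norm_num
    · have h1 : (1:ℤ) ≤ (j:ℤ) := by exact_mod_cast hj1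
      have h2 : (j:ℤ) ≤ ((k-1 : ℕ):ℤ) := by exact_mod_cast hj
      have := hGamma (j:ℤ) h1 h2
      rwa [esym_eq] at this
  set x : Option (Fin n) → ℝ := fun o => o.elim α lam with hxdef
  have hUnone : (Finset.univ : Finset (Option (Fin n))).erase none
      = (Finset.univ : Finset (Fin n)).map Function.Embedding.some := by
    ext o; cases o <;> simp
  have hxl : (fun t : Fin n => x (Function.Embedding.some t)) = lam := rfl
  have hmapEq : ∀ (j : ℕ) (B : Finset (Fin n)),
      EE x j (B.map Function.Embedding.some) = EE lam j B := by
    intro j B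
    rw [EE_map, hxl]
  have hbridge : ∀ m : ℕ, EE x (m+1) (Finset.univ : Finset (Option (Fin n)))
      = EE lam (m+1) Finset.univ + α * EE lam m Finset.univ := by
    intro m
    have hid := EE_erase (Finset.mem_univ (none : Option (Fin n))) x m
    rw [hUnone, hmapEq, hmapEq, show x none = α from rfl] at hid
    exact hid
  have hOptk : ∀ j, j ≤ k → 0 < EE x j (Finset.univ : Finset (Option (Fin n))) := by
    intro j hj
    cases j with
    | zero => rw [EE_zero]; norm_num
    | succ m =>
      rw [hbridge m]
      rcases eq_or_lt_of_le hj with heq | hlt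
      · subst heq
        have hS2 : 0 < esym n ((m+1:ℕ):ℤ) lam + α * esym n (((m+1:ℕ):ℤ) - 1) lam := hSpos
        have e1 : ((m+1 : ℕ):ℤ) - 1 = ((m:ℕ):ℤ) := by push_cast; ring
        rw [e1, esym_eq, esym_eq] at hS2
        exact hS2
      · have hp1 := hGamFull (m+1) (by omega)
        have hp0 := hGamFull m (by omega)
        have := mul_nonneg hα hp0.le
        linarith
  have hDelEq : ∀ p : Fin n, sumHessDel n α ((k:ℤ)-1) p lam
      = EE x (k-1) ((Finset.univ : Finset (Option (Fin n))).erase (some p)) := by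
    intro p
    have hnone : (none : Option (Fin n))
        ∈ (Finset.univ : Finset (Option (Fin n))).erase (some p) := by simp
    have hid := EE_erase hnone x (k-2)
    have hcomm : (((Finset.univ : Finset (Option (Fin n))).erase (some p)).erase none)
        = (Finset.univ.erase p).map Function.Embedding.some := by
      rw [Finset.erase_right_comm, hUnone, Finset.map_erase]
      rfl
    have hk2 : k - 2 + 1 = k - 1 := by omega
    rw [hk2] at hid
    rw [hcomm, hmapEq, hmapEq, show x none = α from rfl] at hid
    have e1 : (k:ℤ) - 1 = ((k-1:ℕ):ℤ) := by omega
    have e2 : (k:ℤ) - 1 - 1 = ((k-2:ℕ):ℤ) := by omega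
    show esymDel n ((k:ℤ)-1) p lam + α * esymDel n ((k:ℤ)-1-1) p lam = _
    rw [e2, e1, esymDel_eq, esymDel_eq, hid]
  refine ⟨?_, ?_, ?_⟩
  · by_contra hng
    push_neg at hng
    have hT : ∀ i ∈ Finset.univ.filter (fun i : Fin n => (⟨k-2, by omega⟩ : Fin n) ≤ i),
        lam i ≤ 0 := by
      intro i hi
      have h1 := hsort (⟨k-2, by omega⟩ : Fin n) i (Finset.mem_filter.1 hi).2
      exact h1.trans hng
    have hdel := EE_del_finset hGamFull
      (Finset.univ.filter (fun i : Fin n => (⟨k-2, by omega⟩ : Fin n) ≤ i)) hT (k-1) le_rfl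
    have hcard : (Finset.univ \
        Finset.univ.filter (fun i : Fin n => (⟨k-2, by omega⟩ : Fin n) ≤ i)).card < k - 1 := by
      have hle : (Finset.univ \
          Finset.univ.filter (fun i : Fin n => (⟨k-2, by omega⟩ : Fin n) ≤ i)).card
            ≤ (Finset.range (k-2)).card := by
        refine Finset.card_le_card_of_injOn Fin.val ?_ Fin.val_injective.injOn
        intro i hi
        rw [Finset.mem_coe, Finset.mem_sdiff, Finset.mem_filter] at hi
        have h1 : ¬ (⟨k-2, by omega⟩ : Fin n) ≤ i := fun hh => hi.2 ⟨Finset.mem_univ i, hh⟩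
        have h2 : i < (⟨k-2, by omega⟩ : Fin n) := lt_of_not_ge h1
        rw [Finset.mem_coe, Finset.mem_range]
        exact h2
      rw [Finset.card_range] at hle
      omega
    have hzero := EE_eq_zero lam hcard
    rw [hzero] at hdel
    exact lt_irrefl _ hdel
  · intro i j hij
    rcases eq_or_lt_of_le hij with rfl | hlt
    · exact le_refl _
    have hlam_le : lam j ≤ lam i := hsort i j hij
    rw [hDelEq i, hDelEq j]
    have hsj : (some j : Option (Fin n))
        ∈ (Finset.univ : Finset (Option (Fin n))).erase (some i) := by
      refine Finset.mem_erase.2 ⟨?_, Finset.mem_univ _⟩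
      simpa using (ne_of_lt hlt).symm
    have hsi : (some i : Option (Fin n))
        ∈ (Finset.univ : Finset (Option (Fin n))).erase (some j) := by
      refine Finset.mem_erase.2 ⟨?_, Finset.mem_univ _⟩
      simpa using (ne_of_lt hlt)
    have hk2 : k - 2 + 1 = k - 1 := by omega
    have e1 := EE_erase hsj x (k-2)
    have e2 := EE_erase hsi x (k-2)
    rw [hk2] at e1 e2
    have hcomm : (((Finset.univ : Finset (Option (Fin n))).erase (some j)).erase (some i))
        = (((Finset.univ : Finset (Option (Fin n))).erase (some i)).erase (some j)) :=
      Finset.erase_right_comm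
    rw [hcomm] at e2
    have hC : 0 ≤ EE x (k-2)
        ((((Finset.univ : Finset (Option (Fin n))).erase (some i)).erase (some j))) := by
      have h1 := gard k x Finset.univ hOptk (some i) (Finset.mem_univ _)
      have h2 := gard (k-1) x ((Finset.univ : Finset (Option (Fin n))).erase (some i)) h1
        (some j) hsj (k-2) (by omega)
      exact h2.le
    have hprod : x (some j) * EE x (k-2)
          ((((Finset.univ : Finset (Option (Fin n))).erase (some i)).erase (some j)))
        ≤ x (some i) * EE x (k-2)
          ((((Finset.univ : Finset (Option (Fin n))).erase (some i)).erase (some j))) := by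
      refine mul_le_mul_of_nonneg_right ?_ hC
      exact hlam_le
    linarith
  · rw [hDelEq]
    exact gard k x Finset.univ hOptk (some (⟨0, by omega⟩ : Fin n)) (Finset.mem_univ _)
      (k-1) le_rfl
end
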